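/- Let f : (ℂ*)ⁿ → ℂ* be given by f(z) = z₁^{α₁} ⋯ z_n^{α_n} · g(z) where g : ℂⁿ → ℂ* is continuous (the restriction of a nowhere-vanishing continuous function on ℂⁿ) and α ∈ ℤⁿ. Then the exponent vector α is uniquely determined by f: if z^α g = z^β h with g, h nowhere-vanishing continuous functions on ℂⁿ, then α = β. -/
import Mathlib

open Filter Topology

lemma exploded_aux_le (n : ℕ) (i : Fin n) (α β : Fin n → ℤ)
    (g h : (Fin n → ℂ) → ℂ)
    (hg : Continuous g) (hh : Continuous h) (hh0 : ∀ z, h z ≠ 0)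
    (heq : ∀ z : Fin n → ℂ, (∀ i, z i ≠ 0) →
      (∏ i, (z i) ^ (α i)) * g z = (∏ i, (z i) ^ (β i)) * h z) :
    α i ≤ β i := by
  by_contra hlt
  push_neg at hlt
  obtain ⟨m, hm⟩ : ∃ m : ℕ, α i - β i = (m : ℤ) + 1 := ⟨(α i - β i - 1).toNat, by omega⟩
  set z : ℝ → (Fin n → ℂ) := fun t j => if j = i then (t : ℂ) else 1 with hz
  have hzc : Continuous z := by
    apply continuous_pi
    intro j
    by_cases hj : j = i <;> simp only [hz, hj, if_true, if_false]
    · exact Complex.continuous_ofReal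
    · exact continuous_const
  have key : ∀ t : ℝ, 0 < t → (t : ℂ) ^ (m + 1) * g (z t) = h (z t) := by
    intro t ht
    have htne : (t : ℂ) ≠ 0 := by
      simp only [ne_eq, Complex.ofReal_eq_zero]; exact ne_of_gt ht
    have hzne : ∀ j, z t j ≠ 0 := by
      intro j; by_cases hj : j = i <;> simp [hz, hj, htne]
    have hprod : ∀ γ : Fin n → ℤ, (∏ j, (z t j) ^ (γ j)) = (t : ℂ) ^ (γ i) := by
      intro γ
      rw [Finset.prod_eq_single i]
      · simp [hz]
      · intro j _ hj; simp [hz, hj]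
      · simp
    have h1 := heq (z t) hzne
    rw [hprod α, hprod β] at h1
    have hpow : (t:ℂ) ^ (α i) = (t:ℂ)^(β i) * (t:ℂ)^((m:ℤ)+1) := by
      rw [← zpow_add₀ htne]; congr 1; omega
    rw [hpow, mul_assoc] at h1
    have h2 := mul_left_cancel₀ (zpow_ne_zero _ htne) h1
    rw [← h2]
    congr 1
  have h1 : Tendsto (fun t : ℝ => (t : ℂ) ^ (m + 1) * g (z t)) (𝓝[>] 0) (𝓝 0) := by
    have : Tendsto (fun t : ℝ => (t : ℂ) ^ (m + 1) * g (z t)) (𝓝 0)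
        (𝓝 ((0:ℂ) ^ (m+1) * g (z 0))) := by
      exact ((continuous_pow (m+1)).comp Complex.continuous_ofReal).mul
        (hg.comp hzc) |>.tendsto 0
    rw [zero_pow (Nat.succ_ne_zero m), zero_mul] at this
    exact tendsto_nhdsWithin_of_tendsto_nhds this
  have h2 : Tendsto (fun t : ℝ => h (z t)) (𝓝[>] 0) (𝓝 (h (z 0))) :=
    tendsto_nhdsWithin_of_tendsto_nhds ((hh.comp hzc).tendsto 0)
  have h3 : Tendsto (fun t : ℝ => h (z t)) (𝓝[>] 0) (𝓝 0) :=
    h1.congr' (eventually_mem_nhdsWithin.mono fun t ht => key t ht)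
  exact hh0 (z 0) (tendsto_nhds_unique h2 h3)

/-- The exponent vector of a log smooth 𝕋 function is unique: if
z^α·g = z^β·h on (ℂ*)ⁿ with g,h continuous and nowhere vanishing on ℂⁿ, then α = β. -/
theorem exploded_stmt3 (n : ℕ) (α β : Fin n → ℤ)
    (g h : (Fin n → ℂ) → ℂ)
    (hg : Continuous g) (hg0 : ∀ z, g z ≠ 0)
    (hh : Continuous h) (hh0 : ∀ z, h z ≠ 0)
    (heq : ∀ z : Fin n → ℂ, (∀ i, z i ≠ 0) →
      (∏ i, (z i) ^ (α i)) * g z = (∏ i, (z i) ^ (β i)) * h z) :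
    α = β := by
  funext i
  refine le_antisymm
    (exploded_aux_le n i α β g h hg hh hh0 heq)
    (exploded_aux_le n i β α h g hh hg hg0 (fun z hz => (heq z hz).symm))
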